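/- arXiv:2604.19158 — 4 statements merged into one kernel-verified Lean document; each statement's English description precedes it below -/
import Mathlib

section
/- The tie count μ_B is the largest t ∈ {0, 1, ..., b} such that R(t) = 0, where R(0) = 0 by convention; equivalently, for every t ∈ {0, 1, ..., b}, R(t) = 0 holds if and only if t ≤ μ_B. -/
theorem stmt_3 {ι : Type*} [DecidableEq ι] (x : ι → ℝ) (i : ι) (B : Finset ι)
    (hi : i ∉ B) (R : ℕ → ℝ) (hR0 : R 0 = 0)
    (hR : ∀ t, 1 ≤ t → t ≤ B.card →
      R t = ∑ D ∈ Finset.powersetCard (B.card - t + 1) B, (∏ a ∈ D, (x i - x a)) ^ 2) :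
    ∀ t ≤ B.card, (R t = 0 ↔ t ≤ (B.filter (fun a => x a = x i)).card) := by
  intro t ht
  rcases Nat.eq_zero_or_pos t with h0 | h1
  · subst h0; simp [hR0]
  · rw [hR t h1 ht]
    have hμle : (B.filter (fun a => x a = x i)).card ≤ B.card :=
      Finset.card_filter_le _ _
    rw [Finset.sum_eq_zero_iff_of_nonneg (fun D _ => sq_nonneg _)]
    constructor
    · intro h
      by_contra hlt
      push_neg at hlt
      have hcard : (B \ B.filter (fun a => x a = x i)).card
          = B.card - (B.filter (fun a => x a = x i)).card := by
        rw [Finset.card_sdiff_of_subset (Finset.filter_subset _ _)]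
      have hk' : B.card - t + 1 ≤ (B \ B.filter (fun a => x a = x i)).card := by
        omega
      obtain ⟨D, hD, hDcard⟩ := Finset.exists_subset_card_eq hk'
      have hz := h D (Finset.mem_powersetCard.mpr ⟨hD.trans Finset.sdiff_subset, hDcard⟩)
      have hprod : ∏ a ∈ D, (x i - x a) ≠ 0 := by
        apply Finset.prod_ne_zero_iff.mpr
        intro a ha h0
        have hm := hD ha
        rw [Finset.mem_sdiff, Finset.mem_filter] at hm
        exact hm.2 ⟨hm.1, by linarith [sub_eq_zero.mp h0]⟩
      exact hprod (pow_eq_zero_iff (two_ne_zero) |>.mp hz)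
    · intro hle D hD
      rw [Finset.mem_powersetCard] at hD
      by_contra hne
      have hprod : ∀ a ∈ D, x a ≠ x i := by
        intro a ha heq
        exact hne (by rw [Finset.prod_eq_zero ha (by rw [heq]; ring),
          zero_pow two_ne_zero])
      have hsub : D ⊆ B \ B.filter (fun a => x a = x i) := by
        intro a ha
        rw [Finset.mem_sdiff, Finset.mem_filter]
        exact ⟨hD.1 ha, fun h => hprod a ha h.2⟩
      have hc := Finset.card_le_card hsub
      rw [Finset.card_sdiff_of_subset (Finset.filter_subset _ _)] at hc
      omega
end

section
/- The quantity Π = Σ_{D ⊆ B, |D| = b − μ_B} ∏_{a ∈ D} (x_i − x_a) is never zero, and its sign equals (−1)^{|{a ∈ B : x_a > x_i}|}: Π > 0 if and only if |{a ∈ B : x_a > x_i}| is even, and Π < 0 if and only if |{a ∈ B : x_a > x_i}| is odd. -/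
theorem stmt_7 {ι : Type*} [DecidableEq ι] (x : ι → ℝ) (i : ι) (B : Finset ι)
    (hi : i ∉ B) :
    (∑ D ∈ Finset.powersetCard (B.card - (B.filter (fun a => x a = x i)).card) B,
        ∏ a ∈ D, (x i - x a)) ≠ 0 ∧
    (0 < (∑ D ∈ Finset.powersetCard (B.card - (B.filter (fun a => x a = x i)).card) B,
        ∏ a ∈ D, (x i - x a)) ↔ Even (B.filter (fun a => x a > x i)).card) ∧
    ((∑ D ∈ Finset.powersetCard (B.card - (B.filter (fun a => x a = x i)).card) B,
        ∏ a ∈ D, (x i - x a)) < 0 ↔ Odd (B.filter (fun a => x a > x i)).card) := by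
  classical
  set E := B.filter (fun a => x a = x i) with hE
  set C := B \ E with hCdef
  have hEsub : E ⊆ B := Finset.filter_subset _ _
  have hCcard : C.card = B.card - E.card := Finset.card_sdiff_of_subset hEsub
  -- sum collapses to the product over C
  have hCC : C ∈ Finset.powersetCard (B.card - E.card) B := by
    rw [Finset.mem_powersetCard]
    exact ⟨Finset.sdiff_subset, hCcard⟩
  have hsum : (∑ D ∈ Finset.powersetCard (B.card - E.card) B, ∏ a ∈ D, (x i - x a))
      = ∏ a ∈ C, (x i - x a) := by
    refine Finset.sum_eq_single_of_mem C hCC ?_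
    intro D hD hne
    rw [Finset.mem_powersetCard] at hD
    have : ∃ a ∈ D, a ∈ E := by
      by_contra h
      push_neg at h
      have hDC : D ⊆ C := fun a ha => Finset.mem_sdiff.2 ⟨hD.1 ha, h a ha⟩
      exact hne (Finset.eq_of_subset_of_card_le hDC (by rw [hCcard, hD.2]))
    obtain ⟨a, haD, haE⟩ := this
    have : x a = x i := (Finset.mem_filter.1 haE).2
    exact Finset.prod_eq_zero haD (by rw [this]; ring)
  -- C splits into P (x a > x i) and N (x a < x i)
  set P := B.filter (fun a => x a > x i) with hP
  set N := B.filter (fun a => x a < x i) with hN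
  have hdisj : Disjoint P N := by
    rw [Finset.disjoint_left]
    intro a haP haN
    exact absurd (Finset.mem_filter.1 haP).2 (not_lt.2 (Finset.mem_filter.1 haN).2.le)
  have hCPN : C = P ∪ N := by
    ext a
    simp only [hCdef, hE, hP, hN, Finset.mem_sdiff, Finset.mem_union, Finset.mem_filter]
    constructor
    · rintro ⟨haB, h⟩
      rcases lt_trichotomy (x a) (x i) with h' | h' | h'
      · exact Or.inr ⟨haB, h'⟩
      · exact absurd ⟨haB, h'⟩ h
      · exact Or.inl ⟨haB, h'⟩
    · rintro (⟨haB, h⟩ | ⟨haB, h⟩)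
      · exact ⟨haB, fun h' => absurd h'.2 h.ne'⟩
      · exact ⟨haB, fun h' => absurd h'.2 h.ne⟩
  have hprodC : ∏ a ∈ C, (x i - x a)
      = ((-1 : ℝ) ^ P.card * ∏ a ∈ P, (x a - x i)) * ∏ a ∈ N, (x i - x a) := by
    rw [hCPN, Finset.prod_union hdisj]
    congr 1
    rw [← Finset.prod_const (-1 : ℝ), ← Finset.prod_mul_distrib]
    exact Finset.prod_congr rfl fun a _ => by ring
  have hPpos : 0 < ∏ a ∈ P, (x a - x i) :=
    Finset.prod_pos fun a ha => sub_pos.2 (Finset.mem_filter.1 ha).2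
  have hNpos : 0 < ∏ a ∈ N, (x i - x a) :=
    Finset.prod_pos fun a ha => sub_pos.2 (Finset.mem_filter.1 ha).2
  rw [hsum, hprodC]
  rcases Nat.even_or_odd P.card with hk | hk
  · rw [hk.neg_one_pow]
    have hpos : (0:ℝ) < (1 * ∏ a ∈ P, (x a - x i)) * ∏ a ∈ N, (x i - x a) := by
      rw [one_mul]; positivity
    exact ⟨hpos.ne', ⟨fun _ => hk, fun _ => hpos⟩,
      ⟨fun h => absurd h (not_lt.2 hpos.le), fun h => absurd hk (Nat.not_even_iff_odd.2 h)⟩⟩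
  · rw [hk.neg_one_pow]
    have hneg : ((-1:ℝ) * ∏ a ∈ P, (x a - x i)) * ∏ a ∈ N, (x i - x a) < 0 := by
      have := mul_pos hPpos hNpos
      nlinarith
    exact ⟨hneg.ne, ⟨fun h => absurd h (not_lt.2 hneg.le),
      fun h => absurd hk (Nat.not_odd_iff_even.2 h)⟩, ⟨fun _ => hk, fun _ => hneg⟩⟩
end

section
/- The sign of Π equals the sign of P(i, B^≠) = ∏_{a ∈ B^≠} (x_i − x_a): Π and P(i, B^≠) are equal, both are nonzero, and Π > 0 ↔ P(i, B^≠) > 0. -/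
theorem stmt_8 {ι : Type*} [DecidableEq ι] (x : ι → ℝ) (i : ι) (B : Finset ι)
    (hi : i ∉ B) :
    (∑ D ∈ Finset.powersetCard (B.card - (B.filter (fun a => x a = x i)).card) B,
        ∏ a ∈ D, (x i - x a)) = (∏ a ∈ B.filter (fun a => x a ≠ x i), (x i - x a)) ∧
    (∑ D ∈ Finset.powersetCard (B.card - (B.filter (fun a => x a = x i)).card) B,
        ∏ a ∈ D, (x i - x a)) ≠ 0 ∧
    (∏ a ∈ B.filter (fun a => x a ≠ x i), (x i - x a)) ≠ 0 ∧
    (0 < (∑ D ∈ Finset.powersetCard (B.card - (B.filter (fun a => x a = x i)).card) B,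
        ∏ a ∈ D, (x i - x a)) ↔
      0 < ∏ a ∈ B.filter (fun a => x a ≠ x i), (x i - x a)) := by
  set F := B.filter (fun a => x a ≠ x i) with hF
  have hcard : B.card - (B.filter (fun a => x a = x i)).card = F.card := by
    have h2 : (B.filter (fun a => x a = x i)).card + F.card = B.card := by
      rw [hF]
      simpa using Finset.card_filter_add_card_filter_not
        (s := B) (p := fun a => x a = x i)
    omega
  have hFB : F ⊆ B := Finset.filter_subset _ _
  have hsum : (∑ D ∈ Finset.powersetCard
      (B.card - (B.filter (fun a => x a = x i)).card) B,
      ∏ a ∈ D, (x i - x a)) = ∏ a ∈ F, (x i - x a) := by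
    rw [hcard]
    apply Finset.sum_eq_single_of_mem
    · exact Finset.mem_powersetCard.2 ⟨hFB, rfl⟩
    · intro D hD hne
      rw [Finset.mem_powersetCard] at hD
      obtain ⟨hDB, hDc⟩ := hD
      by_cases hsub : D ⊆ F
      · exact absurd (Finset.eq_of_subset_of_card_le hsub (le_of_eq hDc.symm)) hne
      · obtain ⟨a, haD, haF⟩ := Finset.not_subset.1 hsub
        have hxa : x a = x i := by
          by_contra h
          exact haF (Finset.mem_filter.2 ⟨hDB haD, h⟩)
        exact Finset.prod_eq_zero haD (by rw [hxa]; ring)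
  have hne : (∏ a ∈ F, (x i - x a)) ≠ 0 := by
    apply Finset.prod_ne_zero_iff.2
    intro a ha
    have := (Finset.mem_filter.1 ha).2
    intro h
    exact this (by linarith [sub_eq_zero.1 h])
  exact ⟨hsum, hsum ▸ hne, hne, by rw [hsum]⟩
end

section
/- Let x : Fin n → ℝ, and for each index i let J_i = {j : x_j > x_i} and r_i = |J_i|. Then for every i, the number of indices j ∈ J_i satisfying |J_j| > (r_i − 1)/2 is at most ⌊r_i / 2⌋; in particular, if j is chosen uniformly at random from a nonempty J_i, then |J_j| > (r_i − 1)/2 holds with probability at most 1/2. -/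
theorem stmt_13 {n : ℕ} (x : Fin n → ℝ) :
    ∀ i : Fin n,
      ((Finset.univ.filter (fun j => x j > x i)).filter (fun j =>
          ((Finset.univ.filter (fun k => x k > x j)).card : ℝ) >
            (((Finset.univ.filter (fun j => x j > x i)).card : ℝ) - 1) / 2)).card ≤
        (Finset.univ.filter (fun j => x j > x i)).card / 2 ∧
      ((Finset.univ.filter (fun j => x j > x i)).Nonempty →
        (((Finset.univ.filter (fun j => x j > x i)).filter (fun j =>
            ((Finset.univ.filter (fun k => x k > x j)).card : ℝ) >
              (((Finset.univ.filter (fun j => x j > x i)).card : ℝ) - 1) / 2)).card : ℝ) /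
          ((Finset.univ.filter (fun j => x j > x i)).card : ℝ) ≤ 1 / 2) := by
  intro i
  set J := Finset.univ.filter (fun j => x j > x i) with hJ
  set r := J.card with hr
  set S := J.filter (fun j =>
      ((Finset.univ.filter (fun k => x k > x j)).card : ℝ) > ((r : ℝ) - 1) / 2) with hS
  have key : S.card ≤ r / 2 := by
    rcases S.eq_empty_or_nonempty with hSe | hSne
    · simp [hSe]
    · obtain ⟨j₀, hj₀S, hj₀max⟩ := S.exists_max_image x hSne
      set A := Finset.univ.filter (fun k => x k > x j₀) with hA
      have hASJ : A ∪ S ⊆ J := by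
        intro k hk
        rcases Finset.mem_union.mp hk with hk | hk
        · simp only [hA, Finset.mem_filter, Finset.mem_univ, true_and] at hk
          have hj₀J : j₀ ∈ J := Finset.mem_of_mem_filter _ hj₀S
          simp only [hJ, Finset.mem_filter, Finset.mem_univ, true_and] at hj₀J ⊢
          linarith
        · exact Finset.mem_of_mem_filter _ hk
      have hdisj : Disjoint A S := by
        rw [Finset.disjoint_left]
        intro k hkA hkS
        simp only [hA, Finset.mem_filter, Finset.mem_univ, true_and] at hkA
        exact absurd (hj₀max k hkS) (not_le.mpr hkA)
      have hcard : A.card + S.card ≤ r := by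
        rw [← Finset.card_union_of_disjoint hdisj]
        exact Finset.card_le_card hASJ
      have hj₀ : ((A.card : ℝ)) > ((r : ℝ) - 1) / 2 := by
        have := (Finset.mem_filter.mp hj₀S).2
        simpa [hA] using this
      have h2 : r ≤ 2 * A.card := by
        have h3 : (r : ℝ) < 2 * A.card + 1 := by linarith
        have h4 : r < 2 * A.card + 1 := by exact_mod_cast h3
        omega
      omega
  refine ⟨key, fun hne => ?_⟩
  have hr0 : 0 < r := Finset.card_pos.mpr hne
  have hr0' : (0 : ℝ) < r := by exact_mod_cast hr0
  rw [div_le_div_iff₀ hr0' (by norm_num)]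
  have h1 : (S.card : ℝ) ≤ (r : ℝ) / 2 := by
    calc (S.card : ℝ) ≤ ((r / 2 : ℕ) : ℝ) := by exact_mod_cast key
    _ ≤ (r : ℝ) / 2 := by
        rw [le_div_iff₀ (by norm_num)]
        exact_mod_cast Nat.div_mul_le_self r 2
  linarith
end
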